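/- With T_n as in the preceding context, each T_n is universally axiomatized and has the Amalgamation Property, and every existentially closed model of T_{n+1} is an existentially closed model of T_n. -/

import Mathlib

open FirstOrder FirstOrder.Language

universe u v w

namespace Companion

variable {L : FirstOrder.Language.{u, v}}

/-- An embedding between structures is elementary. -/
def IsElementaryEmb {M N : Type w} [L.Structure M] [L.Structure N] (f : M ↪[L] N) : Prop :=
  ∀ (k : ℕ) (φ : L.Formula (Fin k)) (a : Fin k → M),
    φ.Realize (fun i => f (a i)) ↔ φ.Realize a

/-- A theory is model-complete: every embedding between models is elementary. -/
def ModelComplete (T : L.Theory) : Prop :=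
  ∀ (M N : Theory.ModelType.{u, v, w} T) (f : M ↪[L] N), IsElementaryEmb f

/-- Every model of `T` embeds in a model of `T'`. -/
def MutuallyEmbeddable (T T' : L.Theory) : Prop :=
  (∀ M : Theory.ModelType.{u, v, w} T, ∃ N : Theory.ModelType.{u, v, w} T', Nonempty (M ↪[L] N)) ∧
  (∀ N : Theory.ModelType.{u, v, w} T', ∃ M : Theory.ModelType.{u, v, w} T, Nonempty (N ↪[L] M))

/-- `T'` is a model-companion of `T`: mutual embeddability of models
(equivalently, the same universal consequences) together with model-completeness of `T'`. -/
def IsModelCompanion (T T' : L.Theory) : Prop :=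
  MutuallyEmbeddable.{u, v, w} T T' ∧ ModelComplete.{u, v, w} T'

/-- `M` is an existentially closed model of `T`. -/
def IsECModelOf (T : L.Theory) (M : Type w) [L.Structure M] : Prop :=
  Nonempty M ∧ M ⊨ T ∧
    ∀ (N : Type w) [L.Structure N], N ⊨ T → ∀ (f : M ↪[L] N)
      (k n : ℕ) (φ : L.BoundedFormula (Fin k) n), φ.IsQF →
      ∀ a : Fin k → M, (∃ b : Fin n → N, φ.Realize (fun i => f (a i)) b) →
        ∃ b : Fin n → M, φ.Realize a b

/-- The amalgamation property for models of a theory. -/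
def HasAP (T : L.Theory) : Prop :=
  ∀ (A B C : Theory.ModelType.{u, v, w} T) (f : A ↪[L] B) (g : A ↪[L] C),
    ∃ (D : Theory.ModelType.{u, v, w} T) (h₁ : B ↪[L] D) (h₂ : C ↪[L] D),
      ∀ x, h₁ (f x) = h₂ (g x)

/-- The theory of a class of structures. -/
def classTheory (L : FirstOrder.Language.{u, v}) (C : ∀ (M : Type w) [L.Structure M], Prop) : L.Theory :=
  {φ | ∀ (M : Type w) [L.Structure M] [Nonempty M], C M → M ⊨ φ}

/-- Existentially quantify the last `n` bound variables. -/
def exsN : ∀ {k : ℕ} (n : ℕ), L.BoundedFormula Empty (k + n) → L.BoundedFormula Empty k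
  | _, 0, φ => φ
  | _, n + 1, φ => exsN n φ.ex

/-- A sentence is `∀∃`. -/
def IsAESentence (φ : L.Sentence) : Prop :=
  ∃ (m n : ℕ) (ψ : L.BoundedFormula Empty (m + n)), ψ.IsQF ∧ φ = (exsN n ψ).alls

/-- A theory is (axiomatizable as) `∀∃`. -/
def IsAETheory (T : L.Theory) : Prop :=
  ∃ A : L.Theory, (∀ φ ∈ A, IsAESentence φ) ∧
    ∀ (M : Type w) [L.Structure M] [Nonempty M], M ⊨ T ↔ M ⊨ A

/-- A sentence is universal. -/
def IsUniversalSentence (φ : L.Sentence) : Prop :=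
  ∃ (n : ℕ) (ψ : L.BoundedFormula Empty n), ψ.IsQF ∧ φ = ψ.alls

/-- A theory is universally axiomatized. -/
def IsUniversalTheory (T : L.Theory) : Prop :=
  ∃ A : L.Theory, (∀ φ ∈ A, IsUniversalSentence φ) ∧
    ∀ (M : Type w) [L.Structure M] [Nonempty M], M ⊨ T ↔ M ⊨ A

end Companion

namespace Companion

open FirstOrder FirstOrder.Language

/-- The language with one unary function symbol `f` and constants `c_k`, `k ∈ ω`. -/
def fLang : FirstOrder.Language where
  Functions k := match k with
    | 0 => ℕ
    | 1 => Unit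
    | _ + 2 => Empty
  Relations _ := Empty

variable (M : Type w) [fLang.Structure M]

/-- The interpretation of `f`. -/
def fOp (x : M) : M := Structure.funMap (L := fLang) (n := 1) () ![x]

/-- The interpretation of the constant `c_k`. -/
def cOp (k : ℕ) : M := Structure.funMap (L := fLang) (n := 0) k ![]

/-- The axioms of `T_n`: `f` is injective; there are no cycles; `f x = c_k` forces
`x = c_{k+1}`; `f c_{k+2} = c_{k+1} → f c_{k+1} = c_k`; and `f c_{k+1} = c_k` for `k < n`. -/
def fClass (n : ℕ) : Prop :=
  Function.Injective (fOp M) ∧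
  (∀ (k : ℕ) (x : M), (fOp M)^[k + 1] x ≠ x) ∧
  (∀ (k : ℕ) (x : M), fOp M x = cOp M k → x = cOp M (k + 1)) ∧
  (∀ k : ℕ, fOp M (cOp M (k + 2)) = cOp M (k + 1) → fOp M (cOp M (k + 1)) = cOp M k) ∧
  (∀ k < n, fOp M (cOp M (k + 1)) = cOp M k)

/-- The theory `T_n`. -/
def fTheory (n : ℕ) : fLang.Theory :=
  classTheory.{0, 0, w} fLang (fun M inst => @fClass M inst n)

/-- The sentence `∀x ∃y, f y = x`. -/
def surjSentence : fLang.Sentence :=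
  (Term.bdEqual (Term.func (L := fLang) (l := 1) () ![&1]) &0).ex.all

/-- The carrier of the standard model `A_β`, `β ≤ ω`. -/
def stdCarrier : ℕ∞ → Type
  | ⊤ => ℤ
  | (_ : ℕ) => ℕ × ℕ

/-- The interpretation of `f` in `A_β`. -/
def stdF : ∀ β : ℕ∞, stdCarrier β → stdCarrier β
  | ⊤ => fun z => (show ℤ from z) + 1
  | (_ : ℕ) => fun p => (p.1, p.2 + 1)

/-- The interpretation of `c_k` in `A_β`. -/
def stdC : ∀ β : ℕ∞, ℕ → stdCarrier β
  | ⊤ => fun k => (show ℤ from -(k : ℤ))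
  | (m : ℕ) => fun k => if m < k then (k - m, 0) else (0, m - k)

/-- The successor function on `A_β ⊕ (I × ω) ⊕ (J × ℤ)`. -/
def bigF (β : ℕ∞) (I J : Type) :
    (stdCarrier β ⊕ (I × ℕ) ⊕ (J × ℤ)) → (stdCarrier β ⊕ (I × ℕ) ⊕ (J × ℤ))
  | Sum.inl x => Sum.inl (stdF β x)
  | Sum.inr (Sum.inl (i, n)) => Sum.inr (Sum.inl (i, n + 1))
  | Sum.inr (Sum.inr (j, z)) => Sum.inr (Sum.inr (j, z + 1))

end Companion

namespace Companion

variable {M : Type w} [fLang.Structure M]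

lemma funMap0_eq (k : fLang.Functions 0) (v : Fin 0 → M) :
    Structure.funMap (L := fLang) (n := 0) k v = cOp M k := by
  unfold cOp; congr 1; funext i; exact i.elim0

lemma funMap1_eq (u : fLang.Functions 1) (v : Fin 1 → M) :
    Structure.funMap (L := fLang) (n := 1) u v = fOp M (v 0) := by
  have hv : v = ![v 0] := by funext i; fin_cases i; rfl
  rw [hv]; rfl

-- terms
def cTerm {α : Type} (k : ℕ) : fLang.Term α := Term.func (l := 0) (show fLang.Functions 0 from k) ![]
def fTerm {α : Type} (t : fLang.Term α) : fLang.Term α := Term.func (l := 1) (show fLang.Functions 1 from ()) ![t]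

lemma realize_cTerm {α : Type} (v : α → M) (k : ℕ) : Term.realize v (cTerm k) = cOp M k := by
  simp only [cTerm, Term.realize_func]
  exact funMap0_eq _ _

lemma realize_fTerm {α : Type} (v : α → M) (t : fLang.Term α) :
    Term.realize v (fTerm t) = fOp M (Term.realize v t) := by
  simp only [fTerm, Term.realize_func]
  exact funMap1_eq (M := M) (show fLang.Functions 1 from ()) (fun i => Term.realize v (![t] i))


def fTermIter {α : Type} : ℕ → fLang.Term α → fLang.Term α
  | 0, t => t
  | k+1, t => fTerm (fTermIter k t)

lemma realize_fTermIter {M : Type w} [fLang.Structure M] {α : Type} (v : α → M) (k : ℕ)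
    (t : fLang.Term α) : Term.realize v (fTermIter k t) = (fOp M)^[k] (Term.realize v t) := by
  induction k with
  | zero => rfl
  | succ k ih => rw [fTermIter, realize_fTerm, ih, Function.iterate_succ_apply']

def injQF : fLang.BoundedFormula Empty 2 :=
  (fTerm (&0) =' fTerm (&1)).imp ((&0 : fLang.Term (Empty ⊕ Fin 2)) =' &1)

def acycQF (k : ℕ) : fLang.BoundedFormula Empty 1 :=
  ((fTermIter (k+1) (&0) : fLang.Term (Empty ⊕ Fin 1)) =' &0).not

def predQF (k : ℕ) : fLang.BoundedFormula Empty 1 :=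
  (fTerm (&0) =' cTerm k).imp ((&0 : fLang.Term (Empty ⊕ Fin 1)) =' cTerm (k+1))

def chainQF (k : ℕ) : fLang.BoundedFormula Empty 0 :=
  ((fTerm (cTerm (k+2)) : fLang.Term (Empty ⊕ Fin 0)) =' cTerm (k+1)).imp
    ((fTerm (cTerm (k+1)) : fLang.Term (Empty ⊕ Fin 0)) =' cTerm k)

def baseQF (k : ℕ) : fLang.BoundedFormula Empty 0 :=
  ((fTerm (cTerm (k+1)) : fLang.Term (Empty ⊕ Fin 0)) =' cTerm k)

def uAx (n : ℕ) : fLang.Theory :=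
  {φ | φ = injQF.alls ∨ (∃ k, φ = (acycQF k).alls) ∨ (∃ k, φ = (predQF k).alls)
      ∨ (∃ k, φ = (chainQF k).alls) ∨ (∃ k < n, φ = (baseQF k).alls)}


variable {M : Type w} [fLang.Structure M]

lemma realize_injQF : M ⊨ injQF.alls ↔ Function.Injective (fOp M) := by
  simp only [Sentence.Realize, BoundedFormula.realize_alls, injQF,
    BoundedFormula.realize_imp, BoundedFormula.realize_bdEqual, realize_fTerm, Term.realize_var, Function.comp_apply, Sum.elim_inr]
  constructor
  · intro h x y hxy; exact h ![x, y] (by simpa using hxy)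
  · intro h xs hxy; exact h hxy

lemma realize_acycQF (k : ℕ) : M ⊨ (acycQF k).alls ↔ ∀ x : M, (fOp M)^[k+1] x ≠ x := by
  simp only [Sentence.Realize, BoundedFormula.realize_alls, acycQF,
    BoundedFormula.realize_not, BoundedFormula.realize_bdEqual, realize_fTermIter, Term.realize_var, Function.comp_apply, Sum.elim_inr]
  constructor
  · intro h x; exact h ![x]
  · intro h xs; exact h _

lemma realize_predQF (k : ℕ) :
    M ⊨ (predQF k).alls ↔ ∀ x : M, fOp M x = cOp M k → x = cOp M (k+1) := by
  simp only [Sentence.Realize, BoundedFormula.realize_alls, predQF,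
    BoundedFormula.realize_imp, BoundedFormula.realize_bdEqual, realize_fTerm, realize_cTerm,
    Term.realize_var, Function.comp_apply, Sum.elim_inr]
  constructor
  · intro h x; exact h ![x]
  · intro h xs; exact h _

lemma realize_chainQF (k : ℕ) :
    M ⊨ (chainQF k).alls ↔
      (fOp M (cOp M (k+2)) = cOp M (k+1) → fOp M (cOp M (k+1)) = cOp M k) := by
  simp only [Sentence.Realize, BoundedFormula.realize_alls, chainQF,
    BoundedFormula.realize_imp, BoundedFormula.realize_bdEqual, realize_fTerm, realize_cTerm]
  constructor
  · intro h hh; exact h ![] hh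
  · intro h xs; exact h

lemma realize_baseQF (k : ℕ) :
    M ⊨ (baseQF k).alls ↔ fOp M (cOp M (k+1)) = cOp M k := by
  simp only [Sentence.Realize, BoundedFormula.realize_alls, baseQF,
    BoundedFormula.realize_bdEqual, realize_fTerm, realize_cTerm]
  constructor
  · intro h; exact h ![]
  · intro h xs; exact h


lemma emb_cOp {M N : Type w} [fLang.Structure M] [fLang.Structure N] (g : M ↪[fLang] N)
    (k : ℕ) : g (cOp M k) = cOp N k := by
  have h := g.map_fun (show fLang.Functions 0 from k) ![]
  rw [funMap0_eq, funMap0_eq] at h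
  exact h

lemma emb_fOp {M N : Type w} [fLang.Structure M] [fLang.Structure N] (g : M ↪[fLang] N)
    (x : M) : g (fOp M x) = fOp N (g x) := by
  have h := g.map_fun (show fLang.Functions 1 from ()) ![x]
  rw [funMap1_eq, funMap1_eq] at h
  simpa using h

lemma emb_fOp_iter {M N : Type w} [fLang.Structure M] [fLang.Structure N] (g : M ↪[fLang] N)
    (m : ℕ) (x : M) : g ((fOp M)^[m] x) = (fOp N)^[m] (g x) := by
  induction m with
  | zero => rfl
  | succ m ih => rw [Function.iterate_succ_apply', Function.iterate_succ_apply', emb_fOp, ih]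

section Amalgam

variable {A B C : Type w} [fLang.Structure A] [fLang.Structure B] [fLang.Structure C]
variable (fab : A ↪[fLang] B) (fac : A ↪[fLang] C)

def AmRel (x : B) (y : C) : Prop :=
  ∃ (k : ℕ) (a : A), (fOp B)^[k] x = fab a ∧ (fOp C)^[k] y = fac a

def amRaw : B ⊕ C → B ⊕ C → Prop
  | .inl x, .inl x' => x = x'
  | .inl x, .inr y => AmRel fab fac x y
  | .inr y, .inl x => AmRel fab fac x y
  | .inr y, .inr y' => y = y'

lemma amRel_fOp {x : B} {y : C} (h : AmRel fab fac x y) :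
    AmRel fab fac (fOp B x) (fOp C y) := by
  obtain ⟨k, a, hx, hy⟩ := h
  exact ⟨k, fOp A a,
    by rw [← Function.iterate_succ_apply, Function.iterate_succ_apply', hx, emb_fOp],
    by rw [← Function.iterate_succ_apply, Function.iterate_succ_apply', hy, emb_fOp]⟩

lemma amRel_fOp_rev {x : B} {y : C} (h : AmRel fab fac (fOp B x) (fOp C y)) :
    AmRel fab fac x y := by
  obtain ⟨k, a, hx, hy⟩ := h
  exact ⟨k + 1, a, by rw [Function.iterate_succ_apply]; exact hx,
    by rw [Function.iterate_succ_apply]; exact hy⟩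

lemma amRel_swap {x : B} {y : C} (h : AmRel fab fac x y) : AmRel fac fab y x := by
  obtain ⟨k, a, hx, hy⟩ := h
  exact ⟨k, a, hy, hx⟩

lemma amRel_right_unique (hBi : Function.Injective (fOp B)) {x x' : B} {y : C}
    (h : AmRel fab fac x y) (h' : AmRel fab fac x' y) : x = x' := by
  have key : ∀ {k k' : ℕ} {a a' : A} {u u' : B}, k ≤ k' →
      (fOp B)^[k] u = fab a → (fOp C)^[k] y = fac a →
      (fOp B)^[k'] u' = fab a' → (fOp C)^[k'] y = fac a' → u' = u := by
    intro k k' a a' u u' hkk hx hy hx' hy'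
    obtain ⟨d, rfl⟩ := Nat.exists_eq_add_of_le hkk
    have h1 : (fOp C)^[k + d] y = fac ((fOp A)^[d] a) := by
      rw [Nat.add_comm, Function.iterate_add_apply, hy, emb_fOp_iter]
    have ha : a' = (fOp A)^[d] a := fac.injective (hy'.symm.trans h1)
    have h2 : (fOp B)^[k + d] u' = (fOp B)^[k + d] u := by
      rw [hx', ha]
      calc fab ((fOp A)^[d] a) = (fOp B)^[d] (fab a) := emb_fOp_iter fab d a
        _ = (fOp B)^[d] ((fOp B)^[k] u) := by rw [hx]
        _ = (fOp B)^[k + d] u := by rw [Nat.add_comm, Function.iterate_add_apply]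
    exact hBi.iterate (k + d) h2
  obtain ⟨k, a, hx, hy⟩ := h
  obtain ⟨k', a', hx', hy'⟩ := h'
  rcases le_total k k' with hkk | hkk
  · exact (key hkk hx hy hx' hy').symm
  · exact key hkk hx' hy' hx hy

lemma amRel_left_unique (hCi : Function.Injective (fOp C)) {x : B} {y y' : C}
    (h : AmRel fab fac x y) (h' : AmRel fab fac x y') : y = y' :=
  amRel_right_unique fac fab hCi (amRel_swap fab fac h) (amRel_swap fab fac h')

lemma amRaw_equiv (hBi : Function.Injective (fOp B)) (hCi : Function.Injective (fOp C)) :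
    Equivalence (amRaw fab fac) := by
  refine ⟨?_, ?_, ?_⟩
  · rintro (x | y) <;> rfl
  · rintro (x | y) (x' | y') h
    · exact h.symm
    · exact h
    · exact h
    · exact h.symm
  · rintro (x | y) (x' | y') (x'' | y'') h h'
    · exact h.trans h'
    · exact h ▸ h'
    · exact amRel_right_unique fab fac hBi h h'
    · exact h' ▸ h
    · exact h' ▸ h
    · exact amRel_left_unique fab fac hCi h h'
    · exact h ▸ h'
    · exact h.trans h'

def amSetoid : Setoid (B ⊕ C) := Relation.EqvGen.setoid (amRaw fab fac)

def amQ : Type w := Quotient (amSetoid fab fac)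

def amMk (s : B ⊕ C) : amQ fab fac := Quotient.mk (amSetoid fab fac) s

def amStep : B ⊕ C → B ⊕ C
  | .inl x => .inl (fOp B x)
  | .inr y => .inr (fOp C y)

lemma amStep_respects : ∀ {s t : B ⊕ C}, amRaw fab fac s t →
    amRaw fab fac (amStep s) (amStep t) := by
  rintro (x | y) (x' | y') h
  · exact congrArg _ h
  · exact amRel_fOp fab fac h
  · exact amRel_fOp fab fac h
  · exact congrArg _ h

lemma amStep_respects' : ∀ s t : B ⊕ C, (amSetoid fab fac).r s t →
    (amSetoid fab fac).r (amStep s) (amStep t) := by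
  intro s t h
  induction h with
  | rel _ _ h => exact Relation.EqvGen.rel _ _ (amStep_respects fab fac h)
  | refl => exact Relation.EqvGen.refl _
  | symm _ _ _ ih => exact Relation.EqvGen.symm _ _ ih
  | trans _ _ _ _ _ ih1 ih2 => exact Relation.EqvGen.trans _ _ _ ih1 ih2

instance amStruc : fLang.Structure (amQ fab fac) where
  funMap {m} f v :=
    match m, f with
    | 0, k => amMk fab fac (.inl (cOp B k))
    | 1, _ => Quotient.map amStep (amStep_respects' fab fac) (v 0)
    | _ + 2, f => f.elim
  RelMap {m} r _ := r.elim

lemma amQ_cOp (k : ℕ) : cOp (amQ fab fac) k = amMk fab fac (.inl (cOp B k)) := rfl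

lemma amQ_fOp (s : B ⊕ C) :
    fOp (amQ fab fac) (amMk fab fac s) = amMk fab fac (amStep s) := rfl

lemma amQ_fOp_iter (m : ℕ) (s : B ⊕ C) :
    (fOp (amQ fab fac))^[m] (amMk fab fac s) = amMk fab fac (amStep^[m] s) := by
  induction m generalizing s with
  | zero => rfl
  | succ m ih => rw [Function.iterate_succ_apply, Function.iterate_succ_apply, amQ_fOp, ih]

lemma amStep_iter_inl (m : ℕ) (x : B) :
    amStep^[m] (Sum.inl x : B ⊕ C) = Sum.inl ((fOp B)^[m] x) := by
  induction m generalizing x with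
  | zero => rfl
  | succ m ih => rw [Function.iterate_succ_apply, Function.iterate_succ_apply]; exact ih _

lemma amStep_iter_inr (m : ℕ) (y : C) :
    amStep^[m] (Sum.inr y : B ⊕ C) = Sum.inr ((fOp C)^[m] y) := by
  induction m generalizing y with
  | zero => rfl
  | succ m ih => rw [Function.iterate_succ_apply, Function.iterate_succ_apply]; exact ih _

lemma amMk_eq_iff (hBi : Function.Injective (fOp B)) (hCi : Function.Injective (fOp C))
    {s t : B ⊕ C} : amMk fab fac s = amMk fab fac t ↔ amRaw fab fac s t := by
  constructor
  · intro h
    exact ((amRaw_equiv fab fac hBi hCi).eqvGen_iff).1 (Quotient.exact h)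
  · intro h
    exact Quotient.sound (Relation.EqvGen.rel _ _ h)

end Amalgam


-- bridge
variable {M : Type w} [fLang.Structure M]

lemma models_uAx_iff (n : ℕ) : M ⊨ uAx n ↔ fClass M n := by
  rw [Theory.model_iff]
  constructor
  · intro h
    exact ⟨realize_injQF.1 (h _ (Or.inl rfl)),
      fun k x => (realize_acycQF k).1 (h _ (Or.inr (Or.inl ⟨k, rfl⟩))) x,
      fun k x => (realize_predQF k).1 (h _ (Or.inr (Or.inr (Or.inl ⟨k, rfl⟩)))) x,
      fun k => (realize_chainQF k).1 (h _ (Or.inr (Or.inr (Or.inr (Or.inl ⟨k, rfl⟩))))),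
      fun k hk => (realize_baseQF k).1 (h _ (Or.inr (Or.inr (Or.inr (Or.inr ⟨k, hk, rfl⟩)))))⟩
  · rintro ⟨h1, h2, h3, h4, h5⟩ φ hφ
    rcases hφ with rfl | ⟨k, rfl⟩ | ⟨k, rfl⟩ | ⟨k, rfl⟩ | ⟨k, hk, rfl⟩
    · exact realize_injQF.2 h1
    · exact (realize_acycQF k).2 (h2 k)
    · exact (realize_predQF k).2 (h3 k)
    · exact (realize_chainQF k).2 (h4 k)
    · exact (realize_baseQF k).2 (h5 k hk)

lemma uAx_sub_fTheory (n : ℕ) : uAx n ⊆ fTheory.{w} n := by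
  intro φ hφ N _ _ hN
  exact ((models_uAx_iff n).2 hN).realize_of_mem φ hφ

lemma models_fTheory_iff [Nonempty M] (n : ℕ) : M ⊨ fTheory.{w} n ↔ fClass M n := by
  constructor
  · intro h
    exact (models_uAx_iff n).1
      ((Theory.model_iff _).2 fun φ hφ => h.realize_of_mem φ (uAx_sub_fTheory n hφ))
  · intro h
    exact (Theory.model_iff _).2 fun φ hφ => hφ M h


section Amalgam2

variable {A B C : Type w} [fLang.Structure A] [fLang.Structure B] [fLang.Structure C]
variable (fab : A ↪[fLang] B) (fac : A ↪[fLang] C)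

lemma amQ_fClass (n : ℕ) (hB : fClass B n) (hC : fClass C n) :
    fClass (amQ fab fac) n := by
  obtain ⟨hBi, hBa, hBp, hBc, hBb⟩ := hB
  obtain ⟨hCi, hCa, hCp, hCc, hCb⟩ := hC
  refine ⟨?_, ?_, ?_, ?_, ?_⟩
  · -- injective
    intro q q'
    refine Quotient.inductionOn₂ q q' ?_
    intro s t h
    rw [show Quotient.mk _ s = amMk fab fac s from rfl,
      show Quotient.mk _ t = amMk fab fac t from rfl] at h ⊢
    rw [amQ_fOp, amQ_fOp, amMk_eq_iff fab fac hBi hCi] at h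
    rw [amMk_eq_iff fab fac hBi hCi]
    rcases s with x | y <;> rcases t with x' | y'
    · exact hBi h
    · exact amRel_fOp_rev fab fac h
    · exact amRel_fOp_rev fab fac h
    · exact hCi h
  · -- acyclic
    intro k q
    refine Quotient.inductionOn q ?_
    intro s h
    rw [show Quotient.mk _ s = amMk fab fac s from rfl, amQ_fOp_iter,
      amMk_eq_iff fab fac hBi hCi] at h
    rcases s with x | y
    · rw [amStep_iter_inl] at h
      exact hBa k x h
    · rw [amStep_iter_inr] at h
      exact hCa k y h
  · -- predecessors of constants
    intro k q
    refine Quotient.inductionOn q ?_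
    intro s h
    rw [show Quotient.mk _ s = amMk fab fac s from rfl] at h ⊢
    rw [amQ_fOp, amQ_cOp, amMk_eq_iff fab fac hBi hCi] at h
    rw [amQ_cOp]
    rcases s with x | y
    · rw [amMk_eq_iff fab fac hBi hCi]
      exact hBp k x h
    · obtain ⟨m, a, h1, h2⟩ := h
      have hb : (fOp B)^[m] (cOp B k) = fab ((fOp A)^[m] (cOp A k)) := by
        rw [emb_fOp_iter, emb_cOp]
      have ha : a = (fOp A)^[m] (cOp A k) := fab.injective (h1.symm.trans hb)
      have hc : (fOp C)^[m] (fOp C y) = (fOp C)^[m] (cOp C k) := by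
        rw [h2, ha, emb_fOp_iter, emb_cOp]
      have hy : fOp C y = cOp C k := hCi.iterate m hc
      have hy' : y = cOp C (k + 1) := hCp k y hy
      rw [hy', amMk_eq_iff fab fac hBi hCi]
      exact ⟨0, cOp A (k + 1), (emb_cOp fab _).symm, (emb_cOp fac _).symm⟩
  · -- chain
    intro k h
    rw [amQ_cOp, amQ_cOp, amQ_fOp, amMk_eq_iff fab fac hBi hCi] at h
    rw [amQ_cOp, amQ_cOp, amQ_fOp, amMk_eq_iff fab fac hBi hCi]
    exact hBc k h
  · -- base
    intro k hk
    rw [amQ_cOp, amQ_cOp, amQ_fOp, amMk_eq_iff fab fac hBi hCi]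
    exact hBb k hk

def amEmbB (hBi : Function.Injective (fOp B)) (hCi : Function.Injective (fOp C)) :
    B ↪[fLang] amQ fab fac where
  toFun b := amMk fab fac (.inl b)
  inj' := by
    intro b b' h
    exact (amMk_eq_iff fab fac hBi hCi).1 h
  map_fun' := by
    intro m f v
    match m, f with
    | 0, k =>
      show amMk fab fac (.inl (Structure.funMap k v)) = _
      rw [funMap0_eq]
      rfl
    | 1, u =>
      show amMk fab fac (.inl (Structure.funMap u v)) = _
      rw [funMap1_eq]
      rfl
  map_rel' := by
    intro m r
    exact r.elim

def amEmbC (hBi : Function.Injective (fOp B)) (hCi : Function.Injective (fOp C)) :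
    C ↪[fLang] amQ fab fac where
  toFun y := amMk fab fac (.inr y)
  inj' := by
    intro y y' h
    exact (amMk_eq_iff fab fac hBi hCi).1 h
  map_fun' := by
    intro m f v
    match m, f with
    | 0, k =>
      show amMk fab fac (.inr (Structure.funMap k v)) = _
      rw [funMap0_eq]
      exact (amMk_eq_iff fab fac hBi hCi).2
        ⟨0, cOp A k, (emb_cOp fab _).symm, (emb_cOp fac _).symm⟩
    | 1, u =>
      show amMk fab fac (.inr (Structure.funMap u v)) = _
      rw [funMap1_eq]
      rfl
  map_rel' := by
    intro m r
    exact r.elim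

lemma amEmb_comm (hBi : Function.Injective (fOp B)) (hCi : Function.Injective (fOp C))
    (a : A) : amEmbB fab fac hBi hCi (fab a) = amEmbC fab fac hBi hCi (fac a) := by
  exact (amMk_eq_iff fab fac hBi hCi).2 ⟨0, a, rfl, rfl⟩

end Amalgam2



/-- Each `T_n` is universally axiomatized and has the amalgamation property,
and every existentially closed model of `T_{n+1}` is an existentially closed model of
`T_n`. -/
theorem fTheory_universal_AP_ec (n : ℕ) :
    IsUniversalTheory.{0, 0, w} (fTheory.{w} n) ∧
    HasAP.{0, 0, w} (fTheory.{w} n) ∧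
    ∀ (M : Type w) [fLang.Structure M],
      IsECModelOf.{0, 0, w} (fTheory.{w} (n + 1)) M →
      IsECModelOf.{0, 0, w} (fTheory.{w} n) M := by
  refine ⟨⟨uAx n, ?_, fun M _ _ => (models_fTheory_iff n).trans (models_uAx_iff n).symm⟩,
    ?_, ?_⟩
  · rintro φ (rfl | ⟨k, rfl⟩ | ⟨k, rfl⟩ | ⟨k, rfl⟩ | ⟨k, hk, rfl⟩)
    · exact ⟨2, injQF, BoundedFormula.IsQF.imp ((BoundedFormula.IsAtomic.equal _ _).isQF)
        ((BoundedFormula.IsAtomic.equal _ _).isQF), rfl⟩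
    · exact ⟨1, acycQF k, BoundedFormula.IsQF.imp ((BoundedFormula.IsAtomic.equal _ _).isQF)
        BoundedFormula.isQF_bot, rfl⟩
    · exact ⟨1, predQF k, BoundedFormula.IsQF.imp ((BoundedFormula.IsAtomic.equal _ _).isQF)
        ((BoundedFormula.IsAtomic.equal _ _).isQF), rfl⟩
    · exact ⟨0, chainQF k, BoundedFormula.IsQF.imp ((BoundedFormula.IsAtomic.equal _ _).isQF)
        ((BoundedFormula.IsAtomic.equal _ _).isQF), rfl⟩
    · exact ⟨0, baseQF k, (BoundedFormula.IsAtomic.equal _ _).isQF, rfl⟩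
  · intro A B C f g
    have hB : fClass (↥B) n := (models_fTheory_iff n).1 B.is_model
    have hC : fClass (↥C) n := (models_fTheory_iff n).1 C.is_model
    haveI : Nonempty (amQ f g) := ⟨amMk f g (.inl (Classical.arbitrary B))⟩
    exact ⟨@Theory.ModelType.mk fLang (fTheory.{w} n) (amQ f g) (amStruc f g)
        ((models_fTheory_iff n).2 (amQ_fClass f g n hB hC)) inferInstance,
      amEmbB f g hB.1 hC.1, amEmbC f g hB.1 hC.1, amEmb_comm f g hB.1 hC.1⟩
  · intro M _ hM
    obtain ⟨hne, hmod, hec⟩ := hM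
    haveI := hne
    have hcls : fClass M (n + 1) := (models_fTheory_iff (n + 1)).1 hmod
    refine ⟨hne, (models_fTheory_iff n).2
      ⟨hcls.1, hcls.2.1, hcls.2.2.1, hcls.2.2.2.1,
        fun k hk => hcls.2.2.2.2 k (Nat.lt_succ_of_lt hk)⟩, ?_⟩
    intro N instN hN f k m φ hφ a hb
    haveI : Nonempty N := ⟨f (Classical.arbitrary M)⟩
    have hNc : fClass N n := (models_fTheory_iff n).1 hN
    have hlast : fOp N (cOp N (n + 1)) = cOp N n := by
      rw [← emb_cOp f (n + 1), ← emb_fOp, hcls.2.2.2.2 n (Nat.lt_succ_self n), emb_cOp]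
    have hNc1 : fClass N (n + 1) := ⟨hNc.1, hNc.2.1, hNc.2.2.1, hNc.2.2.2.1, fun j hj => by
      rcases Nat.lt_succ_iff_lt_or_eq.1 hj with h | rfl
      · exact hNc.2.2.2.2 j h
      · exact hlast⟩
    exact hec N ((models_fTheory_iff (n + 1)).2 hNc1) f k m φ hφ a hb

end Companion
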